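/- Let c1, c2, cf be positive reals with cf > 2·c1 and cf > 2·c2, and define the parallel-system reward matrix r by r(DN,DN) = −cf, r(DN,Rep) = −c2, r(Rep,DN) = −c1, r(Rep,Rep) = −(c1+c2). Then at any critical point (q1, q2) of the VDN least-squares loss Σ (q1 a₁ + q2 a₂ − r a₁ a₂)², both agents strictly prefer repair: q1(Rep) > q1(DN) and q2(Rep) > q2(DN). -/

import Mathlib

/-- VDN least-squares loss in a two-agent, two-action matrix game.
Actions are indexed by `Fin 2` with `0 = DN` (do-nothing) and `1 = Rep` (repair). -/
noncomputable def vdnLoss (r : Fin 2 → Fin 2 → ℝ) (q1 q2 : Fin 2 → ℝ) : ℝ :=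
  ∑ i, ∑ j, (q1 i + q2 j - r i j) ^ 2

lemma deriv_key (a b c x : ℝ) :
    deriv (fun t : ℝ => (t + a) ^ 2 + (t + b) ^ 2 + c) x = 2 * (x + a) + 2 * (x + b) := by
  have h1 : HasDerivAt (fun t : ℝ => (t + a) ^ 2) (2 * (x + a)) x := by
    simpa using ((hasDerivAt_id x).add_const a).fun_pow 2
  have h2 : HasDerivAt (fun t : ℝ => (t + b) ^ 2) (2 * (x + b)) x := by
    simpa using ((hasDerivAt_id x).add_const b).fun_pow 2
  exact ((h1.add h2).add_const c).deriv

/-- In the parallel-system reward matrix, at any critical point of the VDN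
least-squares loss both agents strictly prefer repair. -/
theorem vdn_parallel_prefers_repair (c1 c2 cf : ℝ)
    (hc1 : 0 < c1) (hc2 : 0 < c2) (hcf : 0 < cf)
    (hcf1 : cf > 2 * c1) (hcf2 : cf > 2 * c2)
    (r : Fin 2 → Fin 2 → ℝ)
    (hr00 : r 0 0 = -cf) (hr01 : r 0 1 = -c2)
    (hr10 : r 1 0 = -c1) (hr11 : r 1 1 = -(c1 + c2))
    (q1 q2 : Fin 2 → ℝ)
    (hcrit1 : ∀ a : Fin 2,
      deriv (fun t => vdnLoss r (Function.update q1 a t) q2) (q1 a) = 0)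
    (hcrit2 : ∀ a : Fin 2,
      deriv (fun t => vdnLoss r q1 (Function.update q2 a t)) (q2 a) = 0) :
    q1 1 > q1 0 ∧ q2 1 > q2 0 := by
  have h10 := hcrit1 0
  have h11 := hcrit1 1
  have h20 := hcrit2 0
  have h21 := hcrit2 1
  have e10 : (fun t => vdnLoss r (Function.update q1 0 t) q2)
      = fun t : ℝ => (t + (q2 0 - r 0 0)) ^ 2 + (t + (q2 1 - r 0 1)) ^ 2 +
        ((q1 1 + q2 0 - r 1 0) ^ 2 + (q1 1 + q2 1 - r 1 1) ^ 2) := by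
    funext t
    simp [vdnLoss, Fin.sum_univ_two, Function.update]
    ring
  have e11 : (fun t => vdnLoss r (Function.update q1 1 t) q2)
      = fun t : ℝ => (t + (q2 0 - r 1 0)) ^ 2 + (t + (q2 1 - r 1 1)) ^ 2 +
        ((q1 0 + q2 0 - r 0 0) ^ 2 + (q1 0 + q2 1 - r 0 1) ^ 2) := by
    funext t
    simp [vdnLoss, Fin.sum_univ_two, Function.update, Fin.ext_iff]
    ring
  have e20 : (fun t => vdnLoss r q1 (Function.update q2 0 t))
      = fun t : ℝ => (t + (q1 0 - r 0 0)) ^ 2 + (t + (q1 1 - r 1 0)) ^ 2 +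
        ((q1 0 + q2 1 - r 0 1) ^ 2 + (q1 1 + q2 1 - r 1 1) ^ 2) := by
    funext t
    simp [vdnLoss, Fin.sum_univ_two, Function.update]
    ring
  have e21 : (fun t => vdnLoss r q1 (Function.update q2 1 t))
      = fun t : ℝ => (t + (q1 0 - r 0 1)) ^ 2 + (t + (q1 1 - r 1 1)) ^ 2 +
        ((q1 0 + q2 0 - r 0 0) ^ 2 + (q1 1 + q2 0 - r 1 0) ^ 2) := by
    funext t
    simp [vdnLoss, Fin.sum_univ_two, Function.update, Fin.ext_iff]
    ring
  rw [e10, deriv_key] at h10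
  rw [e11, deriv_key] at h11
  rw [e20, deriv_key] at h20
  rw [e21, deriv_key] at h21
  simp only [hr00, hr01, hr10, hr11] at h10 h11 h20 h21
  constructor <;> nlinarith [h10, h11, h20, h21]
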